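/- Let $\{Q_k\}_k$ be a countable family of pairwise disjoint cubes in $\mathbb{R}^d$ with side lengths $l(Q_k)$, let $s > 0$, and define $T_s f(x) = \sum_k \int_{Q_k} \frac{l(Q_k)^s}{(l(Q_k)+|x-y|)^{d+s}} |f(y)|\,dy$. If $w \in A_1(\mathbb{R}^d)$ and $f \in L^1(\mathbb{R}^d, w)$, then $\|T_s f\|_{L^1(\mathbb{R}^d,w)} \leq C [w]_{A_1} \|f\|_{L^1(\mathbb{R}^d,w)}$ with $C$ depending only on $d$ and $s$. -/

import Mathlib

open MeasureTheory Metric Filter ENNReal NNReal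

noncomputable section

/-- The axis-parallel cube in `ℝ^d` with center `c` and side length `r`. -/
def Cube {d : ℕ} (c : EuclideanSpace ℝ (Fin d)) (r : ℝ) : Set (EuclideanSpace ℝ (Fin d)) :=
  {y | ∀ i, |y i - c i| ≤ r / 2}

/-- The Hardy–Littlewood maximal function (ENNReal-valued). -/
def maximalFn {d : ℕ} (f : EuclideanSpace ℝ (Fin d) → ℝ)
    (x : EuclideanSpace ℝ (Fin d)) : ℝ≥0∞ :=
  ⨆ (r : ℝ) (_ : 0 < r),
    (∫⁻ y in Metric.ball x r, (‖f y‖₊ : ℝ≥0∞) ∂volume) / volume (Metric.ball x r)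

variable {d : ℕ} {s : ℝ}


lemma coord_abs_le_norm (x : EuclideanSpace ℝ (Fin d)) (i : Fin d) : |x i| ≤ ‖x‖ := by
  rw [EuclideanSpace.norm_eq]
  rw [← Real.sqrt_sq_eq_abs]
  apply Real.sqrt_le_sqrt
  have : (x i)^2 = ‖x i‖^2 := by simp [Real.norm_eq_abs, sq_abs]
  rw [this]
  exact Finset.single_le_sum (f := fun j => ‖x j‖^2) (fun j _ => sq_nonneg _) (Finset.mem_univ i)

lemma cube_measurable (c : EuclideanSpace ℝ (Fin d)) (r : ℝ) : MeasurableSet (Cube c r) := by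
  have : Cube c r = ⋂ i, {y : EuclideanSpace ℝ (Fin d) | |y i - c i| ≤ r / 2} := by
    ext y; simp [Cube, Set.mem_iInter]
  rw [this]
  refine MeasurableSet.iInter fun i => ?_
  have hc : Continuous fun y : EuclideanSpace ℝ (Fin d) => |y i - c i| :=
    ((continuous_apply i).comp (EuclideanSpace.equiv (Fin d) ℝ).continuous |>.sub continuous_const).abs
  exact measurableSet_le hc.measurable measurable_const

lemma ball_subset_cube (c : EuclideanSpace ℝ (Fin d)) (r : ℝ) :
    ball c (r/2) ⊆ Cube c r := by
  intro y hy i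
  have := coord_abs_le_norm (y - c) i
  have h2 : (y - c) i = y i - c i := by simp
  rw [h2] at this
  have : |y i - c i| ≤ ‖y - c‖ := this
  have hn : ‖y - c‖ < r/2 := by rwa [mem_ball, dist_eq_norm] at hy
  linarith

lemma norm_le_of_mem_cube {c y : EuclideanSpace ℝ (Fin d)} {r : ℝ} (hr : 0 ≤ r)
    (hy : y ∈ Cube c r) : ‖y - c‖ ≤ Real.sqrt d * r / 2 := by
  rw [EuclideanSpace.norm_eq]
  have h1 : ∑ i, ‖(y - c) i‖^2 ≤ (d : ℝ) * (r/2)^2 := by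
    have : ∀ i : Fin d, ‖(y - c) i‖^2 ≤ (r/2)^2 := by
      intro i
      have h2 : (y - c) i = y i - c i := by simp
      rw [h2, Real.norm_eq_abs]
      exact pow_le_pow_left₀ (abs_nonneg _) (hy i) 2
    calc ∑ i, ‖(y - c) i‖^2 ≤ ∑ _i : Fin d, (r/2)^2 := Finset.sum_le_sum (fun i _ => this i)
    _ = (d : ℝ) * (r/2)^2 := by simp [mul_comm]
  calc Real.sqrt (∑ i, ‖(y - c) i‖^2) ≤ Real.sqrt ((d:ℝ) * (r/2)^2) := Real.sqrt_le_sqrt h1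
  _ = Real.sqrt d * (r/2) := by
      rw [Real.sqrt_mul (Nat.cast_nonneg d), Real.sqrt_sq (by linarith)]
  _ = Real.sqrt d * r / 2 := by ring


lemma kernel_center_bound (hs : 0 ≤ s) {l : ℝ} (hl : 0 < l)
    {c y x : EuclideanSpace ℝ (Fin d)} (hy : ‖y - c‖ ≤ Real.sqrt d * l / 2) :
    l ^ s / (l + ‖x - y‖) ^ ((d : ℝ) + s) ≤
      (1 + Real.sqrt d) ^ ((d : ℝ) + s) * (l ^ s / (l + ‖x - c‖) ^ ((d : ℝ) + s)) := by
  set sd := Real.sqrt d with hsd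
  have hsd0 : 0 ≤ sd := Real.sqrt_nonneg _
  have hxy : (0:ℝ) ≤ ‖x - y‖ := norm_nonneg _
  have hds : 0 ≤ (d : ℝ) + s := by positivity
  have key : l + ‖x - c‖ ≤ (1 + sd) * (l + ‖x - y‖) := by
    have h1 : ‖x - c‖ ≤ ‖x - y‖ + ‖y - c‖ := by
      have := norm_add_le (x - y) (y - c)
      simpa using this
    nlinarith [mul_nonneg hsd0 hxy]
  have hbpos : 0 < l + ‖x - y‖ := by linarith
  have hcpos : 0 < l + ‖x - c‖ := by positivity
  have h2 : (l + ‖x - c‖) ^ ((d:ℝ)+s) ≤ (1+sd) ^ ((d:ℝ)+s) * (l + ‖x - y‖) ^ ((d:ℝ)+s) := by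
    rw [← Real.mul_rpow (by positivity) hbpos.le]
    exact Real.rpow_le_rpow hcpos.le key hds
  have hA : (0:ℝ) < (l + ‖x - y‖) ^ ((d:ℝ)+s) := Real.rpow_pos_of_pos hbpos _
  have hB : (0:ℝ) < (l + ‖x - c‖) ^ ((d:ℝ)+s) := Real.rpow_pos_of_pos hcpos _
  rw [← mul_div_assoc, div_le_div_iff₀ hA hB]
  nlinarith [Real.rpow_nonneg hl.le s]

lemma kernel_annuli (hs : 0 ≤ s) {l : ℝ} (hl : 0 < l)
    {c y : EuclideanSpace ℝ (Fin d)} (hy : ‖y - c‖ ≤ Real.sqrt d * l / 2)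
    (x : EuclideanSpace ℝ (Fin d)) :
    ENNReal.ofReal (l ^ s / (l + ‖x - c‖) ^ ((d : ℝ) + s)) ≤
      ∑' j : ℕ, ENNReal.ofReal (l ^ s / ((2:ℝ) ^ j * l) ^ ((d : ℝ) + s)) *
        (ball y (((2:ℝ) ^ (j+1) + Real.sqrt d) * l)).indicator (fun _ => 1) x := by
  set sd := Real.sqrt d with hsd
  have hsd0 : 0 ≤ sd := Real.sqrt_nonneg _
  have hxc : (0:ℝ) ≤ ‖x - c‖ := norm_nonneg _
  obtain ⟨j, hj1, hj2⟩ : ∃ j : ℕ, (2:ℝ) ^ j * l ≤ l + ‖x - c‖ ∧ ‖x - c‖ < (2:ℝ) ^ (j+1) * l := by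
    rcases le_or_gt ‖x - c‖ l with h | h
    · exact ⟨0, by simpa using by linarith, by norm_num; nlinarith⟩
    · set n : ℕ := ⌊‖x - c‖ / l⌋₊ with hn
      have htl : (1:ℝ) ≤ ‖x - c‖ / l := by
        rw [le_div_iff₀ hl]; linarith
      have hn1 : 1 ≤ n := Nat.le_floor (by exact_mod_cast htl)
      have hfl : (n : ℝ) ≤ ‖x - c‖ / l := Nat.floor_le (by positivity)
      have hfl2 : ‖x - c‖ / l < n + 1 := Nat.lt_floor_add_one _
      refine ⟨Nat.log 2 n, ?_, ?_⟩
      · have h1 : (2:ℕ) ^ Nat.log 2 n ≤ n := Nat.pow_log_le_self 2 (by omega)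
        have h2 : ((2:ℝ)) ^ Nat.log 2 n ≤ (n:ℝ) := by exact_mod_cast h1
        have h3 : (n:ℝ) * l ≤ ‖x - c‖ := by
          rw [← le_div_iff₀ hl]; exact hfl
        nlinarith
      · have h1 : n < (2:ℕ) ^ (Nat.log 2 n + 1) := Nat.lt_pow_succ_log_self (by norm_num) n
        have h2 : ((n:ℝ)) + 1 ≤ (2:ℝ) ^ (Nat.log 2 n + 1) := by exact_mod_cast h1
        have h3 : ‖x - c‖ < ((n:ℝ) + 1) * l := by
          rw [← div_lt_iff₀ hl]; exact hfl2
        nlinarith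
  refine le_trans ?_ (ENNReal.le_tsum j)
  have hmem : x ∈ ball y (((2:ℝ) ^ (j+1) + sd) * l) := by
    rw [mem_ball, dist_eq_norm]
    have h1 : ‖x - y‖ ≤ ‖x - c‖ + ‖y - c‖ := by
      have := norm_sub_le (x - c) (y - c)
      simpa using this
    nlinarith
  rw [Set.indicator_of_mem hmem, mul_one]
  apply ENNReal.ofReal_le_ofReal
  have hupos : (0:ℝ) < (2:ℝ) ^ j * l := by positivity
  gcongr


lemma coeff_calc (hs : 0 ≤ s) {l : ℝ} (hl : 0 < l) (j : ℕ) :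
    l ^ s / ((2:ℝ) ^ j * l) ^ ((d : ℝ) + s) * ((2:ℝ) ^ j * l) ^ (d : ℕ) =
      ((2:ℝ) ^ (-s)) ^ j := by
  set u : ℝ := (2:ℝ) ^ j * l with hu
  have hupos : 0 < u := by positivity
  have h1 : u ^ ((d:ℝ) + s) = u ^ (d:ℕ) * u ^ s := by
    rw [Real.rpow_add hupos, Real.rpow_natCast]
  have hun : (0:ℝ) < u ^ (d:ℕ) := by positivity
  have hus : (0:ℝ) < u ^ s := Real.rpow_pos_of_pos hupos s
  have h2 : u ^ s = ((2:ℝ) ^ j) ^ s * l ^ s := by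
    rw [hu, Real.mul_rpow (by positivity) hl.le]
  have hls : (0:ℝ) < l ^ s := Real.rpow_pos_of_pos hl s
  have h3 : ((2:ℝ) ^ j) ^ s = ((2:ℝ) ^ s) ^ j := by
    rw [← Real.rpow_natCast (2:ℝ) j, ← Real.rpow_mul (by norm_num),
      ← Real.rpow_natCast ((2:ℝ) ^ s) j, ← Real.rpow_mul (by norm_num)]
    ring_nf
  have h4 : ((2:ℝ) ^ (-s)) ^ j = (((2:ℝ) ^ s) ^ j)⁻¹ := by
    rw [Real.rpow_neg (by norm_num), inv_pow]
  rw [h1, h2, h3, h4]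
  have h2s : (0:ℝ) < ((2:ℝ) ^ s) ^ j := by positivity
  field_simp

lemma setLIntegral_le_maximal {w : EuclideanSpace ℝ (Fin d) → ℝ} (hw0 : ∀ x, 0 ≤ w x)
    (y : EuclideanSpace ℝ (Fin d)) {R : ℝ} (hR : 0 < R) :
    ∫⁻ x in ball y R, ENNReal.ofReal (w x) ∂volume ≤ maximalFn w y * volume (ball y R) := by
  have h1 : ∫⁻ x in ball y R, ENNReal.ofReal (w x) ∂volume
      = ∫⁻ x in ball y R, (‖w x‖₊ : ℝ≥0∞) ∂volume :=
    lintegral_congr fun x => (Real.enorm_eq_ofReal (hw0 x)).symm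
  rw [h1]
  have hb0 : volume (ball y R) ≠ 0 := (measure_ball_pos _ y hR).ne'
  have hbt : volume (ball y R) ≠ ⊤ := measure_ball_lt_top.ne
  rw [← ENNReal.div_le_iff hb0 hbt]
  exact le_iSup₂ (f := fun (r : ℝ) (_ : 0 < r) =>
    (∫⁻ x in ball y r, (‖w x‖₊ : ℝ≥0∞) ∂volume) / volume (ball y r)) R hR

lemma b_bound (hs : 0 < s) {w : EuclideanSpace ℝ (Fin d) → ℝ} (hw0 : ∀ x, 0 ≤ w x)
    (hwm : AEMeasurable (fun x => ENNReal.ofReal (w x)) volume)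
    {l : ℝ} (hl : 0 < l) {c y : EuclideanSpace ℝ (Fin d)}
    (hy : ‖y - c‖ ≤ Real.sqrt d * l / 2) :
    ∫⁻ x, ENNReal.ofReal (l ^ s / (l + ‖x - c‖) ^ ((d : ℝ) + s)) *
        ENNReal.ofReal (w x) ∂volume ≤
      (ENNReal.ofReal ((2 + Real.sqrt d) ^ (d : ℕ)) * volume (ball (0 : EuclideanSpace ℝ (Fin d)) 1) *
        ∑' j : ℕ, (ENNReal.ofReal ((2:ℝ) ^ (-s))) ^ j) * maximalFn w y := by
  set sd := Real.sqrt d with hsd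
  have hsd0 : 0 ≤ sd := Real.sqrt_nonneg _
  set W : EuclideanSpace ℝ (Fin d) → ℝ≥0∞ := fun x => ENNReal.ofReal (w x) with hW
  set R : ℕ → ℝ := fun j => ((2:ℝ) ^ (j+1) + sd) * l with hR
  have hRpos : ∀ j, 0 < R j := fun j => by positivity
  set coeff : ℕ → ℝ≥0∞ := fun j => ENNReal.ofReal (l ^ s / ((2:ℝ) ^ j * l) ^ ((d : ℝ) + s))
    with hcoeff
  have step1 : ∫⁻ x, ENNReal.ofReal (l ^ s / (l + ‖x - c‖) ^ ((d : ℝ) + s)) * W x ∂volume ≤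
      ∑' j : ℕ, ∫⁻ x, coeff j * (ball y (R j)).indicator (fun _ => 1) x * W x ∂volume := by
    rw [← lintegral_tsum]
    · apply lintegral_mono fun x => ?_
      exact (mul_le_mul_left (kernel_annuli hs.le hl hy x) _).trans_eq
        ENNReal.tsum_mul_right.symm
    · intro j
      exact ((measurable_const.indicator measurableSet_ball).const_mul _).aemeasurable.mul hwm
  have step2 : ∀ j : ℕ, ∫⁻ x, coeff j * (ball y (R j)).indicator (fun _ => 1) x * W x ∂volume
      = coeff j * ∫⁻ x in ball y (R j), W x ∂volume := by
    intro j
    have hpt : ∀ x, coeff j * (ball y (R j)).indicator (fun _ => 1) x * W x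
        = (ball y (R j)).indicator (fun x => coeff j * W x) x := by
      intro x
      by_cases hx : x ∈ ball y (R j) <;> simp [hx]
    rw [lintegral_congr hpt, lintegral_indicator measurableSet_ball _,
      lintegral_const_mul'' _ hwm.restrict]
  have step3 : ∀ j : ℕ, coeff j * volume (ball y (R j)) ≤
      ENNReal.ofReal ((2 + sd) ^ (d : ℕ)) * (ENNReal.ofReal ((2:ℝ) ^ (-s))) ^ j *
        volume (ball (0 : EuclideanSpace ℝ (Fin d)) 1) := by
    intro j
    rw [Measure.addHaar_ball_of_pos _ _ (hRpos j), ← mul_assoc]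
    apply mul_le_mul_left
    rw [finrank_euclideanSpace_fin, hcoeff, ← ENNReal.ofReal_mul (by positivity)]
    rw [← ENNReal.ofReal_pow (by positivity), ← ENNReal.ofReal_mul (by positivity)]
    apply ENNReal.ofReal_le_ofReal
    have hkey : R j ^ (d:ℕ) ≤ (2 + sd) ^ (d:ℕ) * ((2:ℝ) ^ j * l) ^ (d:ℕ) := by
      rw [← mul_pow]
      apply pow_le_pow_left₀ (hRpos j).le
      have hRj : R j = ((2:ℝ) * 2 ^ j + sd) * l := by simp only [hR]; ring
      have h2j : (1:ℝ) ≤ (2:ℝ) ^ j := one_le_pow₀ (by norm_num)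
      rw [hRj]
      nlinarith [mul_nonneg hsd0 hl.le]
    have hcpos : 0 < l ^ s / ((2:ℝ) ^ j * l) ^ ((d : ℝ) + s) := by
      apply div_pos (Real.rpow_pos_of_pos hl s) (Real.rpow_pos_of_pos (by positivity) _)
    calc l ^ s / ((2:ℝ) ^ j * l) ^ ((d : ℝ) + s) * R j ^ (d:ℕ)
        ≤ l ^ s / ((2:ℝ) ^ j * l) ^ ((d : ℝ) + s) * ((2 + sd) ^ (d:ℕ) * ((2:ℝ) ^ j * l) ^ (d:ℕ)) := by
          exact mul_le_mul_of_nonneg_left hkey hcpos.le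
      _ = (2 + sd) ^ (d:ℕ) * (l ^ s / ((2:ℝ) ^ j * l) ^ ((d : ℝ) + s) * ((2:ℝ) ^ j * l) ^ (d:ℕ)) := by
          ring
      _ = (2 + sd) ^ (d:ℕ) * ((2:ℝ) ^ (-s)) ^ j := by rw [coeff_calc hs.le hl j]
  calc ∫⁻ x, ENNReal.ofReal (l ^ s / (l + ‖x - c‖) ^ ((d : ℝ) + s)) * W x ∂volume
      ≤ ∑' j : ℕ, coeff j * ∫⁻ x in ball y (R j), W x ∂volume := by
        refine step1.trans ?_
        exact le_of_eq (tsum_congr step2)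
    _ ≤ ∑' j : ℕ, coeff j * (maximalFn w y * volume (ball y (R j))) := by
        exact ENNReal.tsum_le_tsum fun j =>
          mul_le_mul_right (setLIntegral_le_maximal hw0 y (hRpos j)) _
    _ = ∑' j : ℕ, (coeff j * volume (ball y (R j))) * maximalFn w y := by
        apply tsum_congr fun j => by ring
    _ ≤ ∑' j : ℕ, (ENNReal.ofReal ((2 + sd) ^ (d : ℕ)) * (ENNReal.ofReal ((2:ℝ) ^ (-s))) ^ j *
          volume (ball (0 : EuclideanSpace ℝ (Fin d)) 1)) * maximalFn w y := by
        exact ENNReal.tsum_le_tsum fun j => mul_le_mul_left (step3 j) _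
    _ = (ENNReal.ofReal ((2 + sd) ^ (d : ℕ)) * volume (ball (0 : EuclideanSpace ℝ (Fin d)) 1) *
          ∑' j : ℕ, (ENNReal.ofReal ((2:ℝ) ^ (-s))) ^ j) * maximalFn w y := by
        have hc : ∀ j : ℕ, ENNReal.ofReal ((2 + sd) ^ (d : ℕ)) * (ENNReal.ofReal ((2:ℝ) ^ (-s))) ^ j *
            volume (ball (0 : EuclideanSpace ℝ (Fin d)) 1) * maximalFn w y
            = (ENNReal.ofReal ((2 + sd) ^ (d : ℕ)) * volume (ball (0 : EuclideanSpace ℝ (Fin d)) 1) *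
              maximalFn w y) * (ENNReal.ofReal ((2:ℝ) ^ (-s))) ^ j := fun j => by ring
        rw [tsum_congr hc, ENNReal.tsum_mul_left]
        ring

/-- Let `{Q_k}` be pairwise disjoint cubes with side lengths `l k`, `s > 0`, and
`T_s f(x) = ∑_k ∫_{Q_k} l(Q_k)^s/(l(Q_k)+|x-y|)^{d+s} |f(y)| dy`.  If `w ∈ A₁(ℝ^d)`
(i.e. `Mw ≤ [w]_{A₁} w` a.e.) and `f ∈ L¹(ℝ^d,w)`, then
`‖T_s f‖_{L¹(w)} ≤ C [w]_{A₁} ‖f‖_{L¹(w)}` with `C` depending only on `d` and `s`. -/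
theorem Ts_weighted_L1 (d : ℕ) (hd : 1 ≤ d) (s : ℝ) (hs : 0 < s) :
    ∃ C : ℝ≥0∞, C ≠ 0 ∧ C ≠ ⊤ ∧
      ∀ (w : EuclideanSpace ℝ (Fin d) → ℝ) (cA1 : ℝ≥0),
        (∀ x, 0 ≤ w x) → LocallyIntegrable w volume →
        (∀ᵐ x ∂volume, maximalFn w x ≤ (cA1 : ℝ≥0∞) * ENNReal.ofReal (w x)) →
        ∀ (c : ℕ → EuclideanSpace ℝ (Fin d)) (l : ℕ → ℝ), (∀ k, 0 < l k) →
        Pairwise (Function.onFun Disjoint fun k => Cube (c k) (l k)) →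
        ∀ (f : EuclideanSpace ℝ (Fin d) → ℝ),
          (∫⁻ x, (∑' k, ∫⁻ y in Cube (c k) (l k),
              ENNReal.ofReal (l k ^ s / (l k + ‖x - y‖) ^ ((d : ℝ) + s)) *
                (‖f y‖₊ : ℝ≥0∞) ∂volume) * ENNReal.ofReal (w x) ∂volume)
            ≤ C * (cA1 : ℝ≥0∞) * ∫⁻ x, (‖f x‖₊ : ℝ≥0∞) * ENNReal.ofReal (w x) ∂volume := by
  classical
  set E := EuclideanSpace ℝ (Fin d)
  set sd := Real.sqrt d with hsd
  have hsd0 : 0 ≤ sd := Real.sqrt_nonneg _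
  set v₁ : ℝ≥0∞ := volume (ball (0 : E) 1) with hv₁
  have hv₁0 : v₁ ≠ 0 := (measure_ball_pos _ _ one_pos).ne'
  have hv₁t : v₁ ≠ ⊤ := measure_ball_lt_top.ne
  set r0 : ℝ≥0∞ := ENNReal.ofReal ((2:ℝ) ^ (-s)) with hr0
  have hr0lt : r0 < 1 := by
    rw [hr0, ENNReal.ofReal_lt_one]
    exact Real.rpow_lt_one_of_one_lt_of_neg one_lt_two (neg_neg_iff_pos.mpr hs)
  set geo : ℝ≥0∞ := ∑' j : ℕ, r0 ^ j with hgeo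
  have hgeo_eq : geo = (1 - r0)⁻¹ := ENNReal.tsum_geometric r0
  have hgeo0 : geo ≠ 0 := by
    have : (1:ℝ≥0∞) ≤ geo := by
      rw [hgeo]
      simpa using ENNReal.le_tsum 0
    intro h; rw [h] at this; exact (by simp at this)
  have hgeot : geo ≠ ⊤ := by
    rw [hgeo_eq]
    rw [Ne, ENNReal.inv_eq_top, tsub_eq_zero_iff_le]
    exact not_le.mpr hr0lt
  set A : ℝ≥0∞ := ENNReal.ofReal ((1 + sd) ^ ((d:ℝ) + s)) with hA
  have hA0 : A ≠ 0 := by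
    rw [hA, Ne, ENNReal.ofReal_eq_zero, not_le]
    exact Real.rpow_pos_of_pos (by positivity) _
  have hAt : A ≠ ⊤ := ENNReal.ofReal_ne_top
  set B : ℝ≥0∞ := ENNReal.ofReal ((2 + sd) ^ (d : ℕ)) with hB
  have hB0 : B ≠ 0 := by
    rw [hB, Ne, ENNReal.ofReal_eq_zero, not_le]
    positivity
  have hBt : B ≠ ⊤ := ENNReal.ofReal_ne_top
  set C₂ : ℝ≥0∞ := B * v₁ * geo with hC₂
  have hC₂0 : C₂ ≠ 0 := by
    simp only [hC₂, mul_ne_zero_iff]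
    exact ⟨⟨hB0, hv₁0⟩, hgeo0⟩
  have hC₂t : C₂ ≠ ⊤ := ENNReal.mul_ne_top (ENNReal.mul_ne_top hBt hv₁t) hgeot
  refine ⟨A * C₂, mul_ne_zero hA0 hC₂0, ENNReal.mul_ne_top hAt hC₂t, ?_⟩
  intro w cA1 hw0 hwloc hA1 c l hl hdisj f
  set W : E → ℝ≥0∞ := fun x => ENNReal.ofReal (w x) with hW
  have hWm : AEMeasurable W volume :=
    ENNReal.measurable_ofReal.comp_aemeasurable hwloc.aestronglyMeasurable.aemeasurable
  set g : E → ℝ≥0∞ := fun y => (‖f y‖₊ : ℝ≥0∞) with hg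
  set Q : ℕ → Set E := fun k => Cube (c k) (l k) with hQ
  have hQm : ∀ k, MeasurableSet (Q k) := fun k => cube_measurable _ _
  have hQpos : ∀ k, 0 < volume (Q k) := fun k =>
    lt_of_lt_of_le (measure_ball_pos _ (c k) (half_pos (hl k)))
      (measure_mono (ball_subset_cube (c k) (l k)))
  have hcenter : ∀ k, ∀ y ∈ Q k, ‖y - c k‖ ≤ sd * l k / 2 := fun k y hy =>
    norm_le_of_mem_cube (hl k).le hy
  set Kc : ℕ → E → ℝ≥0∞ :=
    fun k x => ENNReal.ofReal (l k ^ s / (l k + ‖x - c k‖) ^ ((d:ℝ) + s)) with hKc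
  have hKcm : ∀ k, Measurable (Kc k) := by
    intro k
    have hpos : ∀ x : E, 0 < l k + ‖x - c k‖ := fun x => by
      have := hl k; have := norm_nonneg (x - c k); linarith
    have hcont : Continuous fun x : E => l k + ‖x - c k‖ :=
      continuous_const.add ((continuous_id.sub continuous_const).norm)
    have hcont2 : Continuous fun x : E => (l k + ‖x - c k‖) ^ ((d:ℝ) + s) :=
      hcont.rpow_const fun x => Or.inl (hpos x).ne'
    have hcont3 : Continuous fun x : E => l k ^ s / (l k + ‖x - c k‖) ^ ((d:ℝ) + s) :=
      continuous_const.div hcont2 fun x => (Real.rpow_pos_of_pos (hpos x) _).ne'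
    exact (ENNReal.continuous_ofReal.comp hcont3).measurable
  set a : ℕ → ℝ≥0∞ := fun k => ∫⁻ y in Q k, g y ∂volume with ha
  set b : ℕ → ℝ≥0∞ := fun k => ∫⁻ x, Kc k x * W x ∂volume with hb
  -- step I : LHS ≤ ∑' k, (A * a k) * b k
  have stepI : (∫⁻ x, (∑' k, ∫⁻ y in Q k,
      ENNReal.ofReal (l k ^ s / (l k + ‖x - y‖) ^ ((d : ℝ) + s)) * g y ∂volume) * W x ∂volume)
      ≤ ∑' k, (A * a k) * b k := by
    have inner_le : ∀ k x, (∫⁻ y in Q k,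
        ENNReal.ofReal (l k ^ s / (l k + ‖x - y‖) ^ ((d : ℝ) + s)) * g y ∂volume)
        ≤ (A * Kc k x) * a k := by
      intro k x
      have h1 : ∀ᵐ y ∂(volume.restrict (Q k)),
          ENNReal.ofReal (l k ^ s / (l k + ‖x - y‖) ^ ((d : ℝ) + s)) * g y
            ≤ (A * Kc k x) * g y := by
        refine (ae_restrict_iff' (hQm k)).2 (ae_of_all _ fun y hy => ?_)
        refine mul_le_mul_left ?_ _
        rw [hA, hKc, ← ENNReal.ofReal_mul (by positivity)]
        exact ENNReal.ofReal_le_ofReal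
          (kernel_center_bound hs.le (hl k) (hcenter k y hy))
      calc (∫⁻ y in Q k, ENNReal.ofReal (l k ^ s / (l k + ‖x - y‖) ^ ((d : ℝ) + s)) * g y ∂volume)
          ≤ ∫⁻ y in Q k, (A * Kc k x) * g y ∂volume := lintegral_mono_ae h1
        _ = (A * Kc k x) * a k := lintegral_const_mul' _ _
            (ENNReal.mul_ne_top hAt ENNReal.ofReal_ne_top)
    calc (∫⁻ x, (∑' k, ∫⁻ y in Q k,
        ENNReal.ofReal (l k ^ s / (l k + ‖x - y‖) ^ ((d : ℝ) + s)) * g y ∂volume) * W x ∂volume)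
        ≤ ∫⁻ x, ∑' k, (A * Kc k x * a k) * W x ∂volume := by
          refine lintegral_mono fun x => ?_
          refine le_trans (mul_le_mul_left (ENNReal.tsum_le_tsum fun k => inner_le k x) _) ?_
          exact le_of_eq ENNReal.tsum_mul_right.symm
      _ = ∑' k, ∫⁻ x, (A * Kc k x * a k) * W x ∂volume := by
          refine lintegral_tsum fun k => ?_
          exact (((hKcm k).const_mul A).mul_const (a k)).aemeasurable.mul hWm
      _ = ∑' k, (A * a k) * b k := by
          refine tsum_congr fun k => ?_
          have hpt : ∀ x, (A * Kc k x * a k) * W x = (A * a k) * (Kc k x * W x) :=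
            fun x => by ring
          rw [lintegral_congr hpt, lintegral_const_mul'' (f := fun x => Kc k x * W x) _ ((hKcm k).aemeasurable.mul hWm)]
  -- step II : bounds on b k
  have hbM : ∀ k, ∀ y ∈ Q k, b k ≤ C₂ * maximalFn w y := by
    intro k y hy
    exact b_bound hs hw0 hWm (hl k) (hcenter k y hy)
  have hbae : ∀ k, ∀ᵐ y ∂(volume.restrict (Q k)), b k ≤ C₂ * ((cA1 : ℝ≥0∞) * W y) := by
    intro k
    filter_upwards [ae_restrict_of_ae hA1, ae_restrict_mem (hQm k)] with y h1 h2
    exact le_trans (hbM k y h2) (mul_le_mul_right h1 _)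
  have hbfin : ∀ k, b k ≠ ⊤ := by
    intro k hbt
    have h1 : ∀ᵐ y ∂(volume.restrict (Q k)), False := by
      filter_upwards [hbae k] with y h2
      have : C₂ * ((cA1 : ℝ≥0∞) * W y) ≠ ⊤ :=
        ENNReal.mul_ne_top hC₂t (ENNReal.mul_ne_top ENNReal.coe_ne_top ENNReal.ofReal_ne_top)
      rw [hbt] at h2
      exact this (top_le_iff.mp h2)
    have h2 : volume.restrict (Q k) = 0 := by
      rw [← Measure.measure_univ_eq_zero]
      simpa using h1
    rw [Measure.restrict_eq_zero] at h2
    exact absurd h2 (hQpos k).ne'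
  -- step III : per-cube bound
  have stepIII : ∀ k, (A * a k) * b k ≤
      (A * (C₂ * (cA1 : ℝ≥0∞))) * ∫⁻ y in Q k, g y * W y ∂volume := by
    intro k
    have h1 : b k * a k ≤ (C₂ * (cA1 : ℝ≥0∞)) * ∫⁻ y in Q k, g y * W y ∂volume := by
      calc b k * a k = ∫⁻ y in Q k, b k * g y ∂volume :=
            (lintegral_const_mul' _ _ (hbfin k)).symm
        _ ≤ ∫⁻ y in Q k, (C₂ * ((cA1 : ℝ≥0∞) * W y)) * g y ∂volume :=
            lintegral_mono_ae ((hbae k).mono fun y h => mul_le_mul_left h _)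
        _ = ∫⁻ y in Q k, (C₂ * (cA1 : ℝ≥0∞)) * (g y * W y) ∂volume :=
            lintegral_congr fun y => by ring
        _ = (C₂ * (cA1 : ℝ≥0∞)) * ∫⁻ y in Q k, g y * W y ∂volume :=
            lintegral_const_mul' _ _
              (ENNReal.mul_ne_top hC₂t ENNReal.coe_ne_top)
    calc (A * a k) * b k = A * (b k * a k) := by ring
      _ ≤ A * ((C₂ * (cA1 : ℝ≥0∞)) * ∫⁻ y in Q k, g y * W y ∂volume) :=
          mul_le_mul_right h1 _
      _ = (A * (C₂ * (cA1 : ℝ≥0∞))) * ∫⁻ y in Q k, g y * W y ∂volume := by ring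
  -- step IV : sum over disjoint cubes
  have stepIV : ∑' k, ∫⁻ y in Q k, g y * W y ∂volume ≤ ∫⁻ y, g y * W y ∂volume := by
    rw [← lintegral_sum_measure]
    refine lintegral_mono' ?_ le_rfl
    have : Measure.sum (fun k => volume.restrict (Q k)) = volume.restrict (⋃ k, Q k) :=
      (Measure.restrict_iUnion hdisj hQm).symm
    rw [this]
    exact Measure.restrict_le_self
  calc (∫⁻ x, (∑' k, ∫⁻ y in Q k,
      ENNReal.ofReal (l k ^ s / (l k + ‖x - y‖) ^ ((d : ℝ) + s)) * g y ∂volume) * W x ∂volume)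
      ≤ ∑' k, (A * a k) * b k := stepI
    _ ≤ ∑' k, (A * (C₂ * (cA1 : ℝ≥0∞))) * ∫⁻ y in Q k, g y * W y ∂volume :=
        ENNReal.tsum_le_tsum stepIII
    _ = (A * (C₂ * (cA1 : ℝ≥0∞))) * ∑' k, ∫⁻ y in Q k, g y * W y ∂volume :=
        ENNReal.tsum_mul_left
    _ ≤ (A * (C₂ * (cA1 : ℝ≥0∞))) * ∫⁻ y, g y * W y ∂volume := mul_le_mul_right stepIV _
    _ = A * C₂ * (cA1 : ℝ≥0∞) * ∫⁻ x, g x * W x ∂volume := by ring
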